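/- Fix integers 0 < d < n and a partition μ with at most d parts, each at most n−d. Order the boxes of D_μ by (i,j) < (k,l) iff i > k, or i = k and j > l. Let α' < α be two boxes of D_μ lying on the same diagonal k (a box (i,j) lies on diagonal j−i), and let C ⊆ D_μ satisfy: α ∈ C, α' ∉ C, and C contains no box β with α' < β < α lying on diagonal k−1, k, or k+1. Then the Demazure products (in S_n, with respect to the adjacent transpositions) of the words s_{C∖{α}∪{α'}}, s_{C∪{α'}}, and s_C are all equal. -/

import Mathlib

/-- The value of a permutation of `Fin n` at the (1-indexed) position `k`
(as a 1-indexed value in `{1, …, n}`); `0` if `k` is out of range. -/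
def permVal1 {n : ℕ} (v : Equiv.Perm (Fin n)) (k : ℕ) : ℕ :=
  if h : 0 < k ∧ k ≤ n then (v ⟨k - 1, by omega⟩).val + 1 else 0

/-- `v` is `d`-Grassmannian: `v(1) < ⋯ < v(d)` and `v(d+1) < ⋯ < v(n)`. -/
def IsGrassmannian {n : ℕ} (d : ℕ) (v : Equiv.Perm (Fin n)) : Prop :=
  (∀ i j : ℕ, 1 ≤ i → i < j → j ≤ d → permVal1 v i < permVal1 v j) ∧
  (∀ i j : ℕ, d + 1 ≤ i → i < j → j ≤ n → permVal1 v i < permVal1 v j)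

/-- The set of inversions of `v`: pairs `(i, j)` with `1 ≤ i < j ≤ n` and `v(i) > v(j)`. -/
def invPairs {n : ℕ} (v : Equiv.Perm (Fin n)) : Finset (ℕ × ℕ) :=
  ((Finset.Icc 1 n) ×ˢ (Finset.Icc 1 n)).filter
    (fun p => p.1 < p.2 ∧ permVal1 v p.2 < permVal1 v p.1)

/-- The adjacent transposition `s_k = (k, k+1)` of `{1, …, n}` (1-indexed); identity if out of range. -/
def adjT (n k : ℕ) : Equiv.Perm (Fin n) :=
  if h : 1 ≤ k ∧ k < n then Equiv.swap ⟨k - 1, by omega⟩ ⟨k, by omega⟩ else 1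

/-- The boxes of the Young diagram `D_μ` (with at most `d` rows), listed in reading order:
rows from bottom to top, each row from right to left. -/
def boxWord (d : ℕ) (μ : ℕ → ℕ) : List (ℕ × ℕ) :=
  ((List.range d).reverse).flatMap
    (fun i0 => ((List.range (μ (i0 + 1))).reverse).map (fun j0 => (i0 + 1, j0 + 1)))

/-- The reading word of the reflection-valued tableau `T_μ`: the box `(i,j)` contributes
the letter `d + j − i`. -/
def readingWord (d : ℕ) (μ : ℕ → ℕ) : List ℕ :=
  (boxWord d μ).map (fun b => d + b.2 - b.1)

/-- `μ` is a partition with at most `d` parts, each of size at most `c`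
(given as a function on 1-indexed part numbers). -/
def IsPartitionBounded (d c : ℕ) (μ : ℕ → ℕ) : Prop :=
  (∀ i j : ℕ, 1 ≤ i → i ≤ j → μ j ≤ μ i) ∧ (∀ i : ℕ, d < i → μ i = 0) ∧ μ 1 ≤ c

/-- The associated partition of the `d`-Grassmannian permutation `v` is `μ`:
`(λ_v)ᵢ = v(d+1−i) − (d+1−i) = μ i` for `i = 1, …, d`. -/
def hasShape {n : ℕ} (d : ℕ) (v : Equiv.Perm (Fin n)) (μ : ℕ → ℕ) : Prop :=
  ∀ i : ℕ, 1 ≤ i → i ≤ d → permVal1 v (d + 1 - i) = (d + 1 - i) + μ i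

/-- The inversion number of a permutation (its Coxeter length in `Sₙ`). -/
def invCount {n : ℕ} (w : Equiv.Perm (Fin n)) : ℕ := (invPairs w).card

/-- The Demazure product in `Sₙ` of a word of adjacent transpositions,
given by 1-indexed letters. -/
def demProdA (n : ℕ) : List ℕ → Equiv.Perm (Fin n)
  | [] => 1
  | k :: t =>
      if invCount (adjT n k * demProdA n t) > invCount (demProdA n t)
      then adjT n k * demProdA n t
      else demProdA n t

/-- The box `b` lies in the Young diagram `D_μ` (with at most `d` rows). -/
def inDP (d : ℕ) (μ : ℕ → ℕ) (b : ℕ × ℕ) : Prop :=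
  1 ≤ b.1 ∧ b.1 ≤ d ∧ 1 ≤ b.2 ∧ b.2 ≤ μ b.1

/-- The order on boxes: `(i,j) < (k,l)` iff `i > k`, or `i = k` and `j > l`.
`boxLt a b` means `a < b`. -/
def boxLt (a b : ℕ × ℕ) : Prop := b.1 < a.1 ∨ (a.1 = b.1 ∧ b.2 < a.2)

/-- The diagonal of a box: `j − i`. -/
def diag (b : ℕ × ℕ) : ℤ := (b.2 : ℤ) - (b.1 : ℤ)

/-- The word `s_C`: the subword of the reading word of `T_μ` consisting of the letters
lying in boxes of `C`. -/
def subwordOf (d : ℕ) (μ : ℕ → ℕ) (C : Finset (ℕ × ℕ)) : List ℕ :=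
  ((boxWord d μ).filter (fun b => decide (b ∈ C))).map (fun b => d + b.2 - b.1)


section Aux

open Equiv Finset

variable {n : ℕ}

lemma permVal1_of (v : Equiv.Perm (Fin n)) (k : ℕ) (h1 : 1 ≤ k) (h2 : k ≤ n)
    (m : Fin n) (hm : (m : ℕ) = k - 1) : permVal1 v k = (v m : ℕ) + 1 := by
  rw [permVal1, dif_pos ⟨h1, h2⟩]
  have e : (⟨k - 1, by omega⟩ : Fin n) = m := Fin.ext hm.symm
  rw [e]

/-- Inversions as a finset of pairs of `Fin n` positions. -/
def invF (v : Equiv.Perm (Fin n)) : Finset (Fin n × Fin n) :=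
  Finset.univ.filter fun p => p.1 < p.2 ∧ v p.2 < v p.1

lemma invPairs_eq_image (v : Equiv.Perm (Fin n)) :
    invPairs v = (invF v).image (fun p => ((p.1 : ℕ) + 1, (p.2 : ℕ) + 1)) := by
  ext ⟨i, j⟩
  simp only [invPairs, invF, Finset.mem_filter, Finset.mem_product, Finset.mem_Icc,
    Finset.mem_image, Finset.mem_univ, true_and, Prod.mk.injEq, Prod.exists]
  constructor
  · rintro ⟨⟨⟨hi1, hi2⟩, hj1, hj2⟩, hij, hv⟩
    rw [permVal1_of v j hj1 hj2 ⟨j - 1, by omega⟩ rfl,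
        permVal1_of v i hi1 hi2 ⟨i - 1, by omega⟩ rfl] at hv
    exact ⟨⟨i - 1, by omega⟩, ⟨j - 1, by omega⟩,
      ⟨by rw [Fin.lt_def]; simp; omega, by rw [Fin.lt_def]; omega⟩, by simp; omega, by simp; omega⟩
  · rintro ⟨p, q, ⟨hpq, hv⟩, rfl, rfl⟩
    refine ⟨⟨⟨by omega, by omega⟩, by omega, by omega⟩, by rw [Fin.lt_def] at hpq; omega, ?_⟩
    rw [permVal1_of v ((q : ℕ) + 1) (by omega) (by omega) q (by omega),
        permVal1_of v ((p : ℕ) + 1) (by omega) (by omega) p (by omega)]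
    rw [Fin.lt_def] at hv; omega

lemma invCount_eq_invF (v : Equiv.Perm (Fin n)) : invCount v = (invF v).card := by
  rw [invCount, invPairs_eq_image, Finset.card_image_of_injective]
  intro p q h
  simp only [Prod.mk.injEq] at h
  exact Prod.ext (Fin.ext (by omega)) (Fin.ext (by omega))

end Aux

section Aux2

open Equiv Finset

variable {n : ℕ}

lemma not_mem_invF (u u' : Fin n) (h : (u' : ℕ) = (u : ℕ) + 1) (x : Equiv.Perm (Fin n)) :
    (x⁻¹ u, x⁻¹ u') ∉ invF x := by
  simp only [invF, Finset.mem_filter, Finset.mem_univ, true_and, not_and]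
  intro _
  simp only [Equiv.Perm.inv_def, Equiv.apply_symm_apply, Fin.lt_def]
  omega

lemma invF_swap_mul (u u' : Fin n) (h : (u' : ℕ) = (u : ℕ) + 1) (x : Equiv.Perm (Fin n))
    (hqr : x⁻¹ u < x⁻¹ u') :
    invF (Equiv.swap u u' * x) = insert (x⁻¹ u, x⁻¹ u') (invF x) := by
  ext ⟨i, j⟩
  simp only [invF, Finset.mem_filter]
  simp only [invF, Finset.mem_filter, Finset.mem_univ, true_and, Finset.mem_insert,
    Prod.mk.injEq, Equiv.Perm.mul_apply]
  have hqrv : ((x⁻¹ u : Fin n) : ℕ) < ((x⁻¹ u' : Fin n) : ℕ) := hqr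
  have a1 : ((i : ℕ) = ((x⁻¹ u : Fin n) : ℕ)) ↔ ((x i : ℕ) = (u : ℕ)) := by
    rw [← Fin.ext_iff, ← Fin.ext_iff, Equiv.Perm.inv_def, Equiv.eq_symm_apply]
  have a2 : ((i : ℕ) = ((x⁻¹ u' : Fin n) : ℕ)) ↔ ((x i : ℕ) = (u' : ℕ)) := by
    rw [← Fin.ext_iff, ← Fin.ext_iff, Equiv.Perm.inv_def, Equiv.eq_symm_apply]
  have a3 : ((j : ℕ) = ((x⁻¹ u : Fin n) : ℕ)) ↔ ((x j : ℕ) = (u : ℕ)) := by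
    rw [← Fin.ext_iff, ← Fin.ext_iff, Equiv.Perm.inv_def, Equiv.eq_symm_apply]
  have a4 : ((j : ℕ) = ((x⁻¹ u' : Fin n) : ℕ)) ↔ ((x j : ℕ) = (u' : ℕ)) := by
    rw [← Fin.ext_iff, ← Fin.ext_iff, Equiv.Perm.inv_def, Equiv.eq_symm_apply]
  have inj : ((x i : ℕ) = (x j : ℕ)) ↔ ((i : ℕ) = (j : ℕ)) := by
    rw [← Fin.ext_iff, ← Fin.ext_iff, EmbeddingLike.apply_eq_iff_eq]
  simp only [Fin.ext_iff]
  simp only [Equiv.swap_apply_def]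
  split_ifs <;> simp only [Fin.lt_def, Fin.ext_iff] at * <;> omega

lemma invCount_swap_mul_of_lt (u u' : Fin n) (h : (u' : ℕ) = (u : ℕ) + 1)
    (x : Equiv.Perm (Fin n)) (hqr : x⁻¹ u < x⁻¹ u') :
    invCount (Equiv.swap u u' * x) = invCount x + 1 := by
  rw [invCount_eq_invF, invCount_eq_invF, invF_swap_mul u u' h x hqr,
    Finset.card_insert_of_notMem (not_mem_invF u u' h x)]

lemma invCount_swap_mul_of_gt (u u' : Fin n) (h : (u' : ℕ) = (u : ℕ) + 1)
    (x : Equiv.Perm (Fin n)) (hqr : x⁻¹ u' < x⁻¹ u) :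
    invCount x = invCount (Equiv.swap u u' * x) + 1 := by
  have key := invCount_swap_mul_of_lt u u' h (Equiv.swap u u' * x) ?_
  · rwa [← mul_assoc, Equiv.swap_mul_self, one_mul] at key
  · simpa [mul_inv_rev, Equiv.swap_inv, Equiv.Perm.mul_apply, Equiv.swap_apply_left,
      Equiv.swap_apply_right] using hqr

lemma invCount_swap_lt_iff (u u' : Fin n) (h : (u' : ℕ) = (u : ℕ) + 1)
    (x : Equiv.Perm (Fin n)) :
    invCount (Equiv.swap u u' * x) > invCount x ↔ x⁻¹ u < x⁻¹ u' := by
  have hne : x⁻¹ u ≠ x⁻¹ u' := by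
    intro e
    have : u = u' := x⁻¹.injective e
    rw [this] at h; omega
  rcases lt_or_gt_of_ne hne with hlt | hgt
  · simpa [invCount_swap_mul_of_lt u u' h x hlt] using hlt
  · have := invCount_swap_mul_of_gt u u' h x hgt
    constructor
    · intro hh; omega
    · intro hh; exact absurd hh (not_lt_of_gt hgt)

lemma adjT_eq_swap (a : ℕ) (h1 : 1 ≤ a) (h2 : a < n) :
    adjT n a = Equiv.swap ⟨a - 1, by omega⟩ ⟨a, h2⟩ := by
  rw [adjT, dif_pos ⟨h1, h2⟩]

lemma invCount_adjT_lt_iff (a : ℕ) (h1 : 1 ≤ a) (h2 : a < n) (x : Equiv.Perm (Fin n)) :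
    invCount (adjT n a * x) > invCount x ↔
      x⁻¹ ⟨a - 1, by omega⟩ < x⁻¹ ⟨a, h2⟩ := by
  rw [adjT_eq_swap a h1 h2]
  exact invCount_swap_lt_iff _ _ (by simp; omega) x

lemma adjT_mul_self (a : ℕ) : adjT n a * adjT n a = 1 := by
  rw [adjT]
  split_ifs with h
  · exact Equiv.swap_mul_self _ _
  · exact one_mul 1

end Aux2


section Aux3

open Equiv

variable {n : ℕ}

lemma adjT_eq_one {b : ℕ} (h : ¬(1 ≤ b ∧ b < n)) : adjT n b = 1 := dif_neg h

/-- The Demazure step. -/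
def dstep (n k : ℕ) (w : Equiv.Perm (Fin n)) : Equiv.Perm (Fin n) :=
  if invCount (adjT n k * w) > invCount w then adjT n k * w else w

lemma demProdA_cons (k : ℕ) (t : List ℕ) :
    demProdA n (k :: t) = dstep n k (demProdA n t) := rfl

lemma dstep_pos {a : ℕ} {w : Equiv.Perm (Fin n)}
    (h : invCount (adjT n a * w) > invCount w) : dstep n a w = adjT n a * w := if_pos h

lemma dstep_neg {a : ℕ} {w : Equiv.Perm (Fin n)}
    (h : ¬invCount (adjT n a * w) > invCount w) : dstep n a w = w := if_neg h

lemma dstep_idem (a : ℕ) (w : Equiv.Perm (Fin n)) :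
    dstep n a (dstep n a w) = dstep n a w := by
  by_cases hP : invCount (adjT n a * w) > invCount w
  · rw [dstep_pos hP]
    have hss : adjT n a * (adjT n a * w) = w := by
      rw [← mul_assoc, adjT_mul_self, one_mul]
    apply dstep_neg
    rw [hss]
    omega
  · rw [dstep_neg hP, dstep_neg hP]

lemma adjT_inv (b : ℕ) : (adjT n b)⁻¹ = adjT n b := by
  by_cases hb : 1 ≤ b ∧ b < n
  · rw [adjT_eq_swap b hb.1 hb.2]
    exact Equiv.swap_inv _ _
  · rw [adjT_eq_one hb, inv_one]

lemma adjT_commute (a b : ℕ) (hab : a + 2 ≤ b ∨ b + 2 ≤ a) :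
    adjT n a * adjT n b = adjT n b * adjT n a := by
  by_cases ha : 1 ≤ a ∧ a < n
  · by_cases hb : 1 ≤ b ∧ b < n
    · rw [adjT_eq_swap a ha.1 ha.2, adjT_eq_swap b hb.1 hb.2]
      apply Commute.eq
      apply Equiv.Perm.Disjoint.commute
      intro m
      by_cases hm : m = (⟨a - 1, by omega⟩ : Fin n) ∨ m = (⟨a, ha.2⟩ : Fin n)
      · right
        apply Equiv.swap_apply_of_ne_of_ne <;>
          rcases hm with rfl | rfl <;> rw [Ne, Fin.ext_iff] <;> simp <;> omega
      · push_neg at hm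
        left
        exact Equiv.swap_apply_of_ne_of_ne hm.1 hm.2
    · rw [adjT_eq_one hb, mul_one, one_mul]
  · rw [adjT_eq_one ha, mul_one, one_mul]

lemma adjT_apply_of_far (a b : ℕ) (h1 : 1 ≤ a) (h2 : a < n) (hab : a + 2 ≤ b ∨ b + 2 ≤ a)
    (m : Fin n) (hm : (m : ℕ) = a - 1 ∨ (m : ℕ) = a) : adjT n b m = m := by
  by_cases hb : 1 ≤ b ∧ b < n
  · rw [adjT_eq_swap b hb.1 hb.2]
    apply Equiv.swap_apply_of_ne_of_ne <;> rw [Ne, Fin.ext_iff] <;> simp <;> omega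
  · rw [adjT_eq_one hb]
    rfl

lemma invCount_adjT_far_invariant (a b : ℕ) (h1 : 1 ≤ a) (h2 : a < n)
    (hab : a + 2 ≤ b ∨ b + 2 ≤ a) (x : Equiv.Perm (Fin n)) :
    (invCount (adjT n a * (adjT n b * x)) > invCount (adjT n b * x) ↔
      invCount (adjT n a * x) > invCount x) := by
  rw [invCount_adjT_lt_iff a h1 h2, invCount_adjT_lt_iff a h1 h2]
  have hinv : (adjT n b * x)⁻¹ = x⁻¹ * adjT n b := by
    rw [mul_inv_rev, adjT_inv]
  rw [hinv, Equiv.Perm.mul_apply, Equiv.Perm.mul_apply,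
    adjT_apply_of_far a b h1 h2 hab _ (Or.inl (by simp)),
    adjT_apply_of_far a b h1 h2 hab _ (Or.inr (by simp))]

lemma dstep_comm (a b : ℕ) (ha1 : 1 ≤ a) (ha2 : a < n) (hb1 : 1 ≤ b) (hb2 : b < n)
    (hab : a + 2 ≤ b ∨ b + 2 ≤ a) (w : Equiv.Perm (Fin n)) :
    dstep n a (dstep n b w) = dstep n b (dstep n a w) := by
  have hab' : b + 2 ≤ a ∨ a + 2 ≤ b := hab.symm
  by_cases hPb : invCount (adjT n b * w) > invCount w <;>
    by_cases hPa : invCount (adjT n a * w) > invCount w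
  · rw [dstep_pos hPb, dstep_pos hPa,
      dstep_pos ((invCount_adjT_far_invariant a b ha1 ha2 hab w).mpr hPa),
      dstep_pos ((invCount_adjT_far_invariant b a hb1 hb2 hab' w).mpr hPb),
      ← mul_assoc, ← mul_assoc, adjT_commute a b hab]
  · rw [dstep_pos hPb, dstep_neg hPa,
      dstep_neg (fun hh => hPa ((invCount_adjT_far_invariant a b ha1 ha2 hab w).mp hh)),
      dstep_pos hPb]
  · rw [dstep_neg hPb, dstep_pos hPa,
      dstep_neg (fun hh => hPb ((invCount_adjT_far_invariant b a hb1 hb2 hab' w).mp hh))]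
  · rw [dstep_neg hPb, dstep_neg hPa, dstep_neg hPb]

lemma demProdA_comm (a b : ℕ) (ha1 : 1 ≤ a) (ha2 : a < n) (hb1 : 1 ≤ b) (hb2 : b < n)
    (hab : a + 2 ≤ b ∨ b + 2 ≤ a) (t : List ℕ) :
    demProdA n (a :: b :: t) = demProdA n (b :: a :: t) := by
  rw [demProdA_cons, demProdA_cons, demProdA_cons, demProdA_cons,
    dstep_comm a b ha1 ha2 hb1 hb2 hab]

lemma demProdA_congr (u : List ℕ) {t1 t2 : List ℕ}
    (h : demProdA n t1 = demProdA n t2) :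
    demProdA n (u ++ t1) = demProdA n (u ++ t2) := by
  induction u with
  | nil => exact h
  | cons c u ih => simp only [List.cons_append, demProdA_cons, ih]

lemma demProdA_pass (k : ℕ) (hk1 : 1 ≤ k) (hk2 : k < n) (P : List ℕ) (t : List ℕ)
    (hP : ∀ b ∈ P, 1 ≤ b ∧ b < n ∧ (k + 2 ≤ b ∨ b + 2 ≤ k)) :
    demProdA n (k :: (P ++ t)) = demProdA n (P ++ k :: t) := by
  induction P with
  | nil => rfl
  | cons c P ih =>
      obtain ⟨hc1, hc2, hc3⟩ := hP c (List.mem_cons_self)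
      have := demProdA_comm k c hk1 hk2 hc1 hc2 hc3 (P ++ t)
      rw [List.cons_append, this]
      exact demProdA_congr [c] (ih fun b hb => hP b (List.mem_cons_of_mem c hb))

end Aux3


section Aux4

lemma boxLt_trans {a b c : ℕ × ℕ} (h1 : boxLt a b) (h2 : boxLt b c) : boxLt a c := by
  unfold boxLt at *; omega

lemma boxLt_ne {a b : ℕ × ℕ} (h : boxLt a b) : a ≠ b := by
  rintro rfl; unfold boxLt at h; omega

lemma boxLt_asymm {a b : ℕ × ℕ} (h : boxLt a b) : ¬ boxLt b a := by
  unfold boxLt at *; omega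

lemma mem_boxWord {d : ℕ} {μ : ℕ → ℕ} {b : ℕ × ℕ} (hb : inDP d μ b) : b ∈ boxWord d μ := by
  obtain ⟨i, j⟩ := b
  obtain ⟨h1, h2, h3, h4⟩ := hb
  simp only [inDP] at h1 h2 h3 h4
  rw [boxWord]
  simp only [List.mem_flatMap, List.mem_reverse, List.mem_range, List.mem_map]
  refine ⟨i - 1, by omega, j - 1, ?_, ?_⟩
  · rw [show i - 1 + 1 = i by omega]; omega
  · rw [show i - 1 + 1 = i by omega, show j - 1 + 1 = j by omega]

lemma boxWord_pairwise (d : ℕ) (μ : ℕ → ℕ) : List.Pairwise boxLt (boxWord d μ) := by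
  rw [boxWord, List.pairwise_flatMap]
  constructor
  · intro a _
    rw [List.pairwise_map, List.pairwise_reverse]
    exact List.pairwise_lt_range.imp fun h => Or.inr ⟨rfl, by omega⟩
  · rw [List.pairwise_reverse]
    refine List.pairwise_lt_range.imp ?_
    intro x y h p hp q hq
    simp only [List.mem_map, List.mem_reverse, List.mem_range] at hp hq
    obtain ⟨jp, _, rfl⟩ := hp
    obtain ⟨jq, _, rfl⟩ := hq
    exact Or.inl (by omega)

lemma split_three {l : List (ℕ × ℕ)} (hp : List.Pairwise boxLt l) {a b : ℕ × ℕ}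
    (ha : a ∈ l) (hb : b ∈ l) (hab : boxLt a b) :
    ∃ A B E, l = A ++ a :: (B ++ b :: E) := by
  obtain ⟨A, T, rfl⟩ := List.append_of_mem ha
  have hbT : b ∈ T := by
    rcases List.mem_append.mp hb with h | h
    · exfalso
      exact boxLt_asymm hab ((List.pairwise_append.mp hp).2.2 b h a (List.mem_cons_self))
    · rcases List.mem_cons.mp h with h | h
      · exact absurd h.symm (boxLt_ne hab)
      · exact h
  obtain ⟨B, E, rfl⟩ := List.append_of_mem hbT
  exact ⟨A, B, E, rfl⟩

lemma filter_congr_of_iff {l : List (ℕ × ℕ)} {S T : Finset (ℕ × ℕ)}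
    (h : ∀ a ∈ l, (a ∈ S ↔ a ∈ T)) :
    l.filter (fun b => decide (b ∈ S)) = l.filter (fun b => decide (b ∈ T)) :=
  List.filter_congr fun a ha => decide_eq_decide.mpr (h a ha)

end Aux4

lemma demProdA_idem {n : ℕ} (a : ℕ) (t : List ℕ) :
    demProdA n (a :: a :: t) = demProdA n (a :: t) := by
  rw [demProdA_cons a (a :: t), demProdA_cons a t, dstep_idem]

/-- Moving a box of `C` along its diagonal (or adding a box on the same diagonal), when no
box of `C` strictly between them lies on that diagonal or an adjacent one, does not change
the Demazure product of the word `s_C`. -/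
theorem stmt_9 (n d : ℕ) (hd : 0 < d) (hdn : d < n) (μ : ℕ → ℕ)
    (hμ : IsPartitionBounded d (n - d) μ)
    (C : Finset (ℕ × ℕ)) (hC : ∀ b ∈ C, inDP d μ b)
    (α α' : ℕ × ℕ) (hα : inDP d μ α) (hα' : inDP d μ α')
    (hlt : boxLt α' α) (hdiag : diag α' = diag α)
    (hmem : α ∈ C) (hmem' : α' ∉ C)
    (hbetween : ∀ β ∈ C, boxLt α' β → boxLt β α →
      diag β ≠ diag α - 1 ∧ diag β ≠ diag α ∧ diag β ≠ diag α + 1) :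
    demProdA n (subwordOf d μ ((C.erase α) ∪ {α'})) = demProdA n (subwordOf d μ C) ∧
    demProdA n (subwordOf d μ (C ∪ {α'})) = demProdA n (subwordOf d μ C) := by
  classical
  obtain ⟨hμ_anti, hμ_zero, hμ_bound⟩ := hμ
  simp only [subwordOf]
  set f : ℕ × ℕ → ℕ := fun b => d + b.2 - b.1 with hf
  -- letters of boxes in the diagram are in range
  have hletter : ∀ b : ℕ × ℕ, inDP d μ b → 1 ≤ f b ∧ f b < n := by
    intro b hb
    obtain ⟨h1, h2, h3, h4⟩ := hb
    have hb1 : μ b.1 ≤ μ 1 := hμ_anti 1 b.1 le_rfl h1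
    simp only [hf]
    omega
  -- split the box word around α' and α
  obtain ⟨A, B, E, hsplit⟩ :=
    split_three (boxWord_pairwise d μ) (mem_boxWord hα') (mem_boxWord hα) hlt
  have hpw := boxWord_pairwise d μ
  rw [hsplit] at hpw
  have pa := List.pairwise_append.mp hpw
  have pc := List.pairwise_cons.mp pa.2.1
  have pd := List.pairwise_append.mp pc.2
  have hA : ∀ β ∈ A, boxLt β α' := fun β h => pa.2.2 β h α' List.mem_cons_self
  have hB1 : ∀ β ∈ B, boxLt α' β := fun β h => pc.1 β (List.mem_append_left _ h)
  have hB2 : ∀ β ∈ B, boxLt β α := fun β h => pd.2.2 β h α List.mem_cons_self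
  have hE1 : ∀ β ∈ E, boxLt α β := fun β h => (List.pairwise_cons.mp pd.2.1).1 β h
  have hne1 : α' ≠ α := boxLt_ne hlt
  -- the three filtered lists
  set pC : ℕ × ℕ → Bool := fun b => decide (b ∈ C) with hpC
  have e0 : (boxWord d μ).filter pC =
      A.filter pC ++ (B.filter pC ++ α :: E.filter pC) := by
    rw [hsplit, List.filter_append, List.filter_cons, List.filter_append, List.filter_cons]
    simp [hpC, hmem, hmem']
  have eA1 : A.filter (fun b => decide (b ∈ C ∪ {α'})) = A.filter pC := by
    apply filter_congr_of_iff
    intro a ha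
    simp [Finset.mem_union, boxLt_ne (hA a ha)]
  have eB1 : B.filter (fun b => decide (b ∈ C ∪ {α'})) = B.filter pC := by
    apply filter_congr_of_iff
    intro a ha
    simp [Finset.mem_union, (boxLt_ne (hB1 a ha)).symm]
  have eE1 : E.filter (fun b => decide (b ∈ C ∪ {α'})) = E.filter pC := by
    apply filter_congr_of_iff
    intro a ha
    simp [Finset.mem_union, (boxLt_ne (boxLt_trans hlt (hE1 a ha))).symm]
  have e1 : (boxWord d μ).filter (fun b => decide (b ∈ C ∪ {α'})) =
      A.filter pC ++ (α' :: (B.filter pC ++ α :: E.filter pC)) := by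
    rw [hsplit, List.filter_append, List.filter_cons, List.filter_append, List.filter_cons,
      eA1, eB1, eE1]
    simp [Finset.mem_union, hmem]
  have eA2 : A.filter (fun b => decide (b ∈ C.erase α ∪ {α'})) = A.filter pC := by
    apply filter_congr_of_iff
    intro a ha
    have h2 : a ≠ α := boxLt_ne (boxLt_trans (hA a ha) hlt)
    simp [Finset.mem_union, Finset.mem_erase, boxLt_ne (hA a ha), h2]
  have eB2 : B.filter (fun b => decide (b ∈ C.erase α ∪ {α'})) = B.filter pC := by
    apply filter_congr_of_iff
    intro a ha
    simp [Finset.mem_union, Finset.mem_erase, (boxLt_ne (hB1 a ha)).symm,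
      boxLt_ne (hB2 a ha)]
  have eE2 : E.filter (fun b => decide (b ∈ C.erase α ∪ {α'})) = E.filter pC := by
    apply filter_congr_of_iff
    intro a ha
    simp [Finset.mem_union, Finset.mem_erase, (boxLt_ne (boxLt_trans hlt (hE1 a ha))).symm,
      (boxLt_ne (hE1 a ha)).symm]
  have e2 : (boxWord d μ).filter (fun b => decide (b ∈ C.erase α ∪ {α'})) =
      A.filter pC ++ (α' :: (B.filter pC ++ E.filter pC)) := by
    rw [hsplit, List.filter_append, List.filter_cons, List.filter_append, List.filter_cons,
      eA2, eB2, eE2]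
    simp [Finset.mem_union, Finset.mem_erase, hne1.symm]
  -- letters
  have hk := hletter α hα
  have hfk : f α' = f α := by
    obtain ⟨a1, a2, a3, a4⟩ := hα
    obtain ⟨b1, b2, b3, b4⟩ := hα'
    simp only [diag] at hdiag
    simp only [hf]
    omega
  have hBfar : ∀ c ∈ (B.filter pC).map f,
      1 ≤ c ∧ c < n ∧ (f α + 2 ≤ c ∨ c + 2 ≤ f α) := by
    intro c hc
    simp only [List.mem_map, List.mem_filter, hpC, decide_eq_true_eq] at hc
    obtain ⟨β, ⟨hβB, hβC⟩, rfl⟩ := hc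
    have hβD := hC β hβC
    have hb := hletter β hβD
    have hbet := hbetween β hβC (hB1 β hβB) (hB2 β hβB)
    refine ⟨hb.1, hb.2, ?_⟩
    obtain ⟨a1, a2, a3, a4⟩ := hα
    obtain ⟨b1, b2, b3, b4⟩ := hβD
    simp only [diag] at hbet
    simp only [hf]
    omega
  rw [e0, e1, e2]
  simp only [List.map_append, List.map_cons, hfk]
  constructor
  · exact demProdA_congr ((A.filter pC).map f)
      (demProdA_pass (f α) hk.1 hk.2 ((B.filter pC).map f) ((E.filter pC).map f) hBfar)
  · refine demProdA_congr ((A.filter pC).map f) ?_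
    calc demProdA n (f α :: ((B.filter pC).map f ++ f α :: (E.filter pC).map f))
        = demProdA n ((B.filter pC).map f ++ f α :: f α :: (E.filter pC).map f) :=
          demProdA_pass (f α) hk.1 hk.2 ((B.filter pC).map f) (f α :: (E.filter pC).map f) hBfar
      _ = demProdA n ((B.filter pC).map f ++ f α :: (E.filter pC).map f) :=
          demProdA_congr ((B.filter pC).map f) (demProdA_idem (f α) ((E.filter pC).map f))
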